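/- For m = 1 and n ≥ 4 (with q ≥ 1, 1 + n + q = d + 1), the sign pattern Σ_{1,n,q} is not realizable with the pair (0, d−2). -/

import Mathlib

open Polynomial

lemma rev_linear (ρ : ℝ) : (X - C ρ).reverse = 1 - C ρ * X := by
  have hdeg : (X - C ρ).natDegree = 1 := natDegree_X_sub_C ρ
  ext n
  rw [coeff_reverse, hdeg]
  match n with
  | 0 => simp [revAt_le, coeff_one, coeff_sub, coeff_C_mul, coeff_X]
  | 1 => simp [revAt_le, coeff_one, coeff_sub, coeff_C_mul, coeff_X]
  | (k+2) =>
      rw [revAt_eq_self_of_lt (by omega)]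
      simp [coeff_one, coeff_sub, coeff_C_mul, coeff_X, coeff_C]

lemma rev_prod (s : Multiset ℝ) :
    ((s.map fun ρ => X - C ρ).prod).reverse = (s.map fun ρ => 1 - C ρ * X).prod := by
  induction s using Multiset.induction_on with
  | empty =>
      simp only [Multiset.map_zero, Multiset.prod_zero]
      simpa using reverse_C (1:ℝ)
  | cons ρ s ih =>
      simp only [Multiset.map_cons, Multiset.prod_cons]
      rw [reverse_mul_of_domain, rev_linear, ih]

lemma W_facts (s : Multiset ℝ) (hs : ∀ ρ ∈ s, ρ ≤ 0) :
    (((s.map fun ρ => 1 - C ρ * X).prod).coeff 0 = 1) ∧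
    (0 ≤ ((s.map fun ρ => 1 - C ρ * X).prod).coeff 1) ∧
    (0 ≤ ((s.map fun ρ => 1 - C ρ * X).prod).coeff 2) ∧
    (0 ≤ ((s.map fun ρ => 1 - C ρ * X).prod).coeff 3) ∧
    (2 * ((s.map fun ρ => 1 - C ρ * X).prod).coeff 2
        ≤ (((s.map fun ρ => 1 - C ρ * X).prod).coeff 1) ^ 2) ∧
    (2 * ((s.map fun ρ => 1 - C ρ * X).prod).coeff 1 * ((s.map fun ρ => 1 - C ρ * X).prod).coeff 3
        ≤ (((s.map fun ρ => 1 - C ρ * X).prod).coeff 2) ^ 2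
          + 2 * ((s.map fun ρ => 1 - C ρ * X).prod).coeff 4) := by
  induction s using Multiset.induction_on with
  | empty => simp [coeff_one]
  | cons ρ s ih =>
      obtain ⟨h0, h1, h2, h3, hii, hiii⟩ := ih (fun x hx => hs x (Multiset.mem_cons_of_mem hx))
      have hρ : ρ ≤ 0 := hs ρ (Multiset.mem_cons_self ρ s)
      set W := (s.map fun ρ => 1 - C ρ * X).prod with hW
      simp only [Multiset.map_cons, Multiset.prod_cons]
      have hc : ∀ k : ℕ, ((1 - C ρ * X) * W).coeff (k+1) = W.coeff (k+1) - ρ * W.coeff k := by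
        intro k
        rw [sub_mul, one_mul, coeff_sub, mul_assoc, coeff_C_mul, coeff_X_mul]
      have hc0 : ((1 - C ρ * X) * W).coeff 0 = W.coeff 0 := by
        rw [mul_coeff_zero]; simp
      have hc1 := hc 0; have hc2 := hc 1; have hc3 := hc 2; have hc4 := hc 3
      norm_num at hc1 hc2 hc3 hc4
      rw [hc0, hc1, hc2, hc3, hc4, h0]
      refine ⟨rfl, ?_, ?_, ?_, ?_, ?_⟩
      · nlinarith
      · nlinarith
      · nlinarith
      · nlinarith [sq_nonneg ρ]
      · nlinarith [mul_nonneg (mul_nonneg (neg_nonneg.2 hρ) (neg_nonneg.2 hρ)) (by nlinarith : (0:ℝ) ≤ W.coeff 1 ^ 2 - 2 * W.coeff 2), sq_nonneg ρ]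

lemma final_contra (a b e1 e2 e3 e4 : ℝ)
    (w1 : 0 ≤ e1) (w2 : 0 ≤ e2) (w3 : 0 ≤ e3)
    (wii : 2 * e2 ≤ e1 ^ 2) (wiii : 2 * e1 * e3 ≤ e2 ^ 2 + 2 * e4)
    (hdisc : a ^ 2 < 4 * b)
    (h1 : e1 + a < 0) (h3 : e3 + a * e2 + b * e1 < 0)
    (h4 : e4 + a * e3 + b * e2 < 0) : False := by
  have hte1 : e1 < -a := by linarith
  have ha0 : a < 0 := by linarith
  have star : 4 * e1 * e3 ≤ e1 ^ 2 * e2 + 4 * e4 := by nlinarith [mul_nonneg w2 (by nlinarith : (0:ℝ) ≤ e1 ^ 2 - 2 * e2)]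
  have key : 4 * ((-a) - e1) * e3 > e2 * ((-a) - e1) * ((-a) + e1) := by
    nlinarith [h4, star, mul_nonneg w2 (by nlinarith : (0:ℝ) ≤ 4 * b - a ^ 2)]
  have htpos : (0:ℝ) < (-a) - e1 := by linarith
  have step1 : e2 * ((-a) + e1) < 4 * e3 := by nlinarith [key, htpos]
  have step2 : e2 * (3 * (-a) - e1) > a ^ 2 * e1 := by
    nlinarith [h3, step1, mul_nonneg w1 (by nlinarith : (0:ℝ) ≤ 4 * b - a ^ 2)]
  have hfin : e2 * (3 * (-a) - e1) ≤ e1 ^ 2 * (3 * (-a) - e1) / 2 := by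
    nlinarith [mul_nonneg (by linarith : (0:ℝ) ≤ 3 * (-a) - e1) (by nlinarith : (0:ℝ) ≤ e1 ^ 2 - 2 * e2)]
  nlinarith [step2, hfin,
    mul_nonneg w1 (mul_nonneg (by linarith : (0:ℝ) ≤ (-a) - e1) (by linarith : (0:ℝ) ≤ 2 * (-a) - e1))]

/-- A real polynomial `P` realizes the pair `(pos, neg)` if it has exactly `pos`
distinct positive roots and exactly `neg` distinct negative roots, all of them
simple, and no other real roots. -/
def realizesPair (P : Polynomial ℝ) (pos neg : ℕ) : Prop :=
  P.roots.Nodup ∧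
  (P.roots.filter (fun x => 0 < x)).card = pos ∧
  (P.roots.filter (fun x => x < 0)).card = neg ∧
  (0 : ℝ) ∉ P.roots

/-- `P` defines the sign pattern `Σ_{m,n,q}` (with `m + n + q = d + 1`):
`m` pluses, then `n` minuses, then `q` pluses; in coefficient indexing,
`coeff j > 0` for `j < q`, `coeff j < 0` for `q ≤ j < q + n`, and
`coeff j > 0` for `q + n ≤ j ≤ d`. -/
def definesSigma (P : Polynomial ℝ) (d n q : ℕ) : Prop :=
  (∀ j, j < q → 0 < P.coeff j) ∧
  (∀ j, q ≤ j → j < q + n → P.coeff j < 0) ∧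
  (∀ j, q + n ≤ j → j ≤ d → 0 < P.coeff j)

/-- For `m = 1` and `n ≥ 4`, the sign pattern `Σ_{1,n,q}` is not realizable
with the pair `(0, d - 2)`. -/
theorem stmt6 (d n q : ℕ) (hn : 4 ≤ n) (hq : 1 ≤ q)
    (hsum : 1 + n + q = d + 1) :
    ¬ ∃ P : Polynomial ℝ, P.Monic ∧ P.natDegree = d ∧
      definesSigma P d n q ∧ realizesPair P 0 (d - 2) := by
  rintro ⟨P, hmon, hdeg, hσ, hroots⟩
  obtain ⟨hnodup, hpos, hneg, h0⟩ := hroots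
  have hd5 : 5 ≤ d := by omega
  -- all roots are negative
  have hallneg : ∀ x ∈ P.roots, x < 0 := by
    intro x hx
    rcases lt_trichotomy x 0 with h | h | h
    · exact h
    · exact absurd (h ▸ hx) h0
    · exfalso
      have : x ∈ P.roots.filter (fun x => 0 < x) := Multiset.mem_filter.2 ⟨hx, h⟩
      rw [Multiset.card_eq_zero.1 hpos] at this
      exact absurd this (Multiset.notMem_zero x)
  have hcard : Multiset.card P.roots = d - 2 := by
    rw [← hneg]
    congr 1
    exact (Multiset.filter_eq_self.2 hallneg).symm
  -- factor P = Qf * S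
  obtain ⟨S, hPS, hdegsum, hSroots⟩ := P.exists_prod_multiset_X_sub_C_mul
  set Qf : Polynomial ℝ := (P.roots.map fun a => X - C a).prod with hQf
  have hQfmon : Qf.Monic := monic_multisetProd_X_sub_C _
  have hSmon : S.Monic := by
    have := hmon
    rw [← hPS] at this
    exact hQfmon.of_mul_monic_left this
  have hSdeg : S.natDegree = 2 := by
    rw [hcard, hdeg] at hdegsum; omega
  set a : ℝ := S.coeff 1 with ha
  set b : ℝ := S.coeff 0 with hb
  -- discriminant: a^2 < 4b
  have hdisc : a ^ 2 < 4 * b := by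
    by_contra hcon
    push_neg at hcon
    have hD : 0 ≤ a ^ 2 - 4 * b := by linarith
    set x0 : ℝ := (-a - Real.sqrt (a ^ 2 - 4 * b)) / 2 with hx0
    have hsq := Real.sq_sqrt hD
    have hev' : x0 ^ 2 + a * x0 + b = 0 := by
      rw [hx0]; linear_combination hsq / 4
    have hev : S.eval x0 = 0 := by
      rw [eval_eq_sum_range, hSdeg]
      have hs2 : S.coeff 2 = 1 := by
        have := hSmon.leadingCoeff
        rwa [leadingCoeff, hSdeg] at this
      rw [Finset.sum_range_succ, Finset.sum_range_succ, Finset.sum_range_succ,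
        Finset.sum_range_zero, hs2, ← ha, ← hb]
      linear_combination hev'
    have : x0 ∈ S.roots := by
      rw [mem_roots hSmon.ne_zero]
      exact hev
    rw [hSroots] at this
    exact absurd this (Multiset.notMem_zero x0)
  -- pass to reversed polynomials
  set W : Polynomial ℝ := (P.roots.map fun ρ => 1 - C ρ * X).prod with hWdef
  have hrev : P.reverse = W * S.reverse := by
    rw [← hPS, reverse_mul_of_domain, rev_prod]
  -- coefficients of S.reverse
  have hU0 : S.reverse.coeff 0 = 1 := by
    rw [coeff_reverse, hSdeg, revAt_le (by norm_num)]
    have := hSmon.leadingCoeff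
    rwa [leadingCoeff, hSdeg] at this
  have hU1 : S.reverse.coeff 1 = a := by
    rw [coeff_reverse, hSdeg, revAt_le (by norm_num)]
  have hU2 : S.reverse.coeff 2 = b := by
    rw [coeff_reverse, hSdeg, revAt_le (by norm_num)]
  have hUhigh : ∀ k, 3 ≤ k → S.reverse.coeff k = 0 := by
    intro k hk
    rw [coeff_reverse, hSdeg, revAt_eq_self_of_lt (by omega)]
    exact coeff_eq_zero_of_natDegree_lt (by omega)
  -- coefficients of P.reverse are coefficients of P
  have hrevco : ∀ k, k ≤ d → P.reverse.coeff k = P.coeff (d - k) := by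
    intro k hk
    rw [coeff_reverse, hdeg, revAt_le hk]
  -- W facts
  obtain ⟨w0, w1, w2, w3, wii, wiii⟩ := W_facts P.roots (fun ρ hρ => le_of_lt (hallneg ρ hρ))
  set e1 : ℝ := W.coeff 1
  set e2 : ℝ := W.coeff 2
  set e3 : ℝ := W.coeff 3
  set e4 : ℝ := W.coeff 4
  -- compute coefficients 1, 3, 4 of the product
  have hcm : ∀ k : ℕ, (W * S.reverse).coeff k
      = ∑ i ∈ Finset.range (k + 1), W.coeff i * S.reverse.coeff (k - i) := by
    intro k
    rw [coeff_mul, Finset.Nat.sum_antidiagonal_eq_sum_range_succ_mk]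
  have hV1 : P.reverse.coeff 1 = e1 + a := by
    rw [hrev, hcm]
    rw [Finset.sum_range_succ, Finset.sum_range_succ, Finset.sum_range_zero]
    norm_num [hU0, hU1, (show W.coeff 0 = 1 from w0)]
    ring
  have hV3 : P.reverse.coeff 3 = e3 + a * e2 + b * e1 := by
    rw [hrev, hcm]
    rw [Finset.sum_range_succ, Finset.sum_range_succ, Finset.sum_range_succ,
      Finset.sum_range_succ, Finset.sum_range_zero]
    norm_num [hU0, hU1, hU2, hUhigh 3 (by norm_num), (show W.coeff 0 = 1 from w0)]
    ring
  have hV4 : P.reverse.coeff 4 = e4 + a * e3 + b * e2 := by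
    rw [hrev, hcm]
    rw [Finset.sum_range_succ, Finset.sum_range_succ, Finset.sum_range_succ,
      Finset.sum_range_succ, Finset.sum_range_succ, Finset.sum_range_zero]
    norm_num [hU0, hU1, hU2, hUhigh 3 (by norm_num), hUhigh 4 (by norm_num), (show W.coeff 0 = 1 from w0)]
    ring
  -- sign conditions
  have hs1 : P.coeff (d - 1) < 0 := hσ.2.1 (d - 1) (by omega) (by omega)
  have hs3 : P.coeff (d - 3) < 0 := hσ.2.1 (d - 3) (by omega) (by omega)
  have hs4 : P.coeff (d - 4) < 0 := hσ.2.1 (d - 4) (by omega) (by omega)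
  have h1 : e1 + a < 0 := by rw [← hV1, hrevco 1 (by omega)]; exact hs1
  have h3 : e3 + a * e2 + b * e1 < 0 := by rw [← hV3, hrevco 3 (by omega)]; exact hs3
  have h4 : e4 + a * e3 + b * e2 < 0 := by rw [← hV4, hrevco 4 (by omega)]; exact hs4
  exact final_contra a b e1 e2 e3 e4 w1 w2 w3 wii wiii hdisc h1 h3 h4
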